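/- Let n, m be non-negative integers, not both equal to 0. Then, as an identity of rational numbers: \sum_{d=0}^{\min(n,m)} (-1)^d / 4^{\lfloor (n+m-2d)/2 \rfloor} * ((n+m-2d)/(n+m-d)) * ((n+m-d)! / ((n-d)! * (m-d)! * d!)) * binom(2\lfloor (n+m-2d)/2 \rfloor, \lfloor (n+m-2d)/2 \rfloor) = (1 / 4^{\lfloor n/2 \rfloor + \lfloor m/2 \rfloor}) * binom(2\lfloor n/2 \rfloor, \lfloor n/2 \rfloor) * binom(2\lfloor m/2 \rfloor, \lfloor m/2 \rfloor). -/

import Mathlib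

set_option maxHeartbeats 1600000

noncomputable section CBD

/- ## basic sequence c_k = C(2⌊k/2⌋,⌊k/2⌋)/4^⌊k/2⌋ and its recurrence -/

private def aq (j : ℕ) : ℚ := ((2 * j).choose j : ℚ) / 4 ^ j

private def Cq (k : ℕ) : ℚ := ((2 * (k / 2)).choose (k / 2) : ℚ) / 4 ^ (k / 2)

private lemma Cq_two_mul (j : ℕ) : Cq (2 * j) = aq j := by
  unfold Cq aq; rw [Nat.mul_div_cancel_left j (by norm_num)]

private lemma Cq_two_mul_add_one (j : ℕ) : Cq (2 * j + 1) = aq j := by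
  unfold Cq aq; rw [show (2 * j + 1) / 2 = j by omega]

private lemma aq_rec (j : ℕ) : (2 * (j : ℚ) + 2) * aq (j + 1) = (2 * j + 1) * aq j := by
  have h := Nat.succ_mul_centralBinom_succ j
  simp only [Nat.centralBinom] at h
  have h' : ((j : ℚ) + 1) * ((2 * (j + 1)).choose (j + 1) : ℚ)
      = 2 * (2 * j + 1) * ((2 * j).choose j : ℚ) := by exact_mod_cast congrArg (Nat.cast (R := ℚ)) h
  unfold aq
  have h4 : (4 : ℚ) ^ (j + 1) = 4 * 4 ^ j := by ring
  rw [h4]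
  field_simp
  linear_combination 2 * h'

private lemma Cq_rec (k : ℕ) : ((k : ℚ) + 2) * Cq (k + 2) = Cq (k + 1) + (k : ℚ) * Cq k := by
  rcases Nat.even_or_odd k with ⟨j, hj⟩ | ⟨j, hj⟩
  · subst hj
    rw [show j + j + 2 = 2 * (j + 1) by ring, show j + j + 1 = 2 * j + 1 by ring,
      show j + j = 2 * j by ring, Cq_two_mul, Cq_two_mul_add_one, Cq_two_mul]
    have := aq_rec j
    push_cast
    linarith [this]
  · subst hj
    rw [show 2 * j + 1 + 2 = 2 * (j + 1) + 1 by ring, show 2 * j + 1 + 1 = 2 * (j + 1) by ring,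
      Cq_two_mul_add_one, Cq_two_mul, Cq_two_mul_add_one]
    have := aq_rec j
    push_cast
    linarith [this]

private lemma Cq_zero : Cq 0 = 1 := by norm_num [Cq]
private lemma Cq_one : Cq 1 = 1 := by norm_num [Cq]

/- ## factorial and binomial helpers -/

private lemma fact_cast_ne (x : ℕ) : ((x.factorial : ℚ)) ≠ 0 := by
  exact_mod_cast x.factorial_ne_zero

private lemma fact1 (x : ℕ) : ((x + 1).factorial : ℚ) = ((x : ℚ) + 1) * (x.factorial : ℚ) := by
  rw [Nat.factorial_succ]; push_cast; ring

private lemma n2 (x : ℕ) : x + 2 = x + 1 + 1 := rfl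
private lemma n3 (x : ℕ) : x + 3 = x + 2 + 1 := rfl
private lemma n4 (x : ℕ) : x + 4 = x + 3 + 1 := rfl

private lemma I1_0 (a b : ℕ) :
    ((a:ℚ)+2) * ((a+b+3).choose (a+2) : ℚ) = ((a:ℚ)+b+3) * ((a+b+2).choose (a+1) : ℚ) := by
  rw [Nat.cast_choose ℚ (show a+2 ≤ a+b+3 by omega), Nat.cast_choose ℚ (show a+1 ≤ a+b+2 by omega),
    show a+b+3 - (a+2) = b+1 by omega, show a+b+2 - (a+1) = b+1 by omega]
  simp only [n4, n3, n2, fact1]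
  have h1 := fact_cast_ne a
  have h2 := fact_cast_ne b
  have h3 := fact_cast_ne (a+b)
  push_cast; field_simp; ring

private lemma I2_0 (a b : ℕ) :
    ((a:ℚ)+b+1) * ((a+b+2).choose (a+1) : ℚ)
      = (a:ℚ) * ((a+b+1).choose a : ℚ) + (2*(a:ℚ)+b+2) * ((a+b+1).choose (a+1) : ℚ) := by
  rw [Nat.cast_choose ℚ (show a+1 ≤ a+b+2 by omega), Nat.cast_choose ℚ (show a ≤ a+b+1 by omega),
    Nat.cast_choose ℚ (show a+1 ≤ a+b+1 by omega),
    show a+b+2 - (a+1) = b+1 by omega, show a+b+1 - a = b+1 by omega,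
    show a+b+1 - (a+1) = b by omega]
  simp only [n4, n3, n2, fact1]
  have h1 := fact_cast_ne a
  have h2 := fact_cast_ne b
  have h3 := fact_cast_ne (a+b)
  push_cast; field_simp; ring

private lemma I1d (a b e : ℕ) :
    ((a:ℚ)+e+3) * ((a+b+e+3).choose (e+1) : ℚ) * ((a+b+3).choose (a+2) : ℚ)
      - (2*(a:ℚ)+b+e+5) * ((a+b+e+2).choose e : ℚ) * ((a+b+3).choose (a+2) : ℚ)
    = ((a:ℚ)+b+3) * ((a+b+e+2).choose (e+1) : ℚ) * ((a+b+2).choose (a+1) : ℚ) := by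
  rw [Nat.cast_choose ℚ (show e+1 ≤ a+b+e+3 by omega),
    Nat.cast_choose ℚ (show a+2 ≤ a+b+3 by omega),
    Nat.cast_choose ℚ (show e ≤ a+b+e+2 by omega),
    Nat.cast_choose ℚ (show e+1 ≤ a+b+e+2 by omega),
    Nat.cast_choose ℚ (show a+1 ≤ a+b+2 by omega),
    show a+b+e+3 - (e+1) = a+b+2 by omega, show a+b+3 - (a+2) = b+1 by omega,
    show a+b+e+2 - e = a+b+2 by omega, show a+b+e+2 - (e+1) = a+b+1 by omega,
    show a+b+2 - (a+1) = b+1 by omega]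
  simp only [n4, n3, n2, fact1]
  have h1 := fact_cast_ne a
  have h2 := fact_cast_ne b
  have h3 := fact_cast_ne e
  have h4 := fact_cast_ne (a+b+e)
  have h5 := fact_cast_ne (a+b)
  push_cast; field_simp; ring

private lemma I2d (a b e : ℕ) :
    ((a:ℚ)+b+1) * ((a+b+e+2).choose (e+1) : ℚ) * ((a+b+2).choose (a+1) : ℚ)
      = ((a:ℚ)+e+1) * ((a+b+e+1).choose (e+1) : ℚ) * ((a+b+1).choose a : ℚ)
        + (2*(a:ℚ)+b+e+3) * ((a+b+e+1).choose (e+1) : ℚ) * ((a+b+1).choose (a+1) : ℚ) := by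
  rw [Nat.cast_choose ℚ (show e+1 ≤ a+b+e+2 by omega),
    Nat.cast_choose ℚ (show a+1 ≤ a+b+2 by omega),
    Nat.cast_choose ℚ (show e+1 ≤ a+b+e+1 by omega),
    Nat.cast_choose ℚ (show a ≤ a+b+1 by omega),
    Nat.cast_choose ℚ (show a+1 ≤ a+b+1 by omega),
    show a+b+e+2 - (e+1) = a+b+1 by omega, show a+b+2 - (a+1) = b+1 by omega,
    show a+b+e+1 - (e+1) = a+b by omega, show a+b+1 - a = b+1 by omega,
    show a+b+1 - (a+1) = b by omega]
  simp only [n4, n3, n2, fact1]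
  have h1 := fact_cast_ne a
  have h2 := fact_cast_ne b
  have h3 := fact_cast_ne e
  have h4 := fact_cast_ne (a+b+e)
  have h5 := fact_cast_ne (a+b)
  push_cast; field_simp; ring

private lemma I1t0 (a e : ℕ) :
    ((a:ℚ)+e+3) * ((a+e+2).choose (e+1) : ℚ) - (2*(a:ℚ)+e+4) * ((a+e+1).choose e : ℚ)
      = ((a:ℚ)+2) * ((a+e+1).choose (e+1) : ℚ) := by
  rw [Nat.cast_choose ℚ (show e+1 ≤ a+e+2 by omega),
    Nat.cast_choose ℚ (show e ≤ a+e+1 by omega),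
    Nat.cast_choose ℚ (show e+1 ≤ a+e+1 by omega),
    show a+e+2 - (e+1) = a+1 by omega, show a+e+1 - e = a+1 by omega,
    show a+e+1 - (e+1) = a by omega]
  simp only [n4, n3, n2, fact1]
  have h1 := fact_cast_ne a
  have h3 := fact_cast_ne e
  have h4 := fact_cast_ne (a+e)
  push_cast; field_simp; ring

private lemma I2t0 (a e : ℕ) :
    (a:ℚ) * ((a+e+1).choose (e+1) : ℚ) = ((a:ℚ)+e+1) * ((a+e).choose (e+1) : ℚ) := by
  rcases a with _ | a'
  · simp [Nat.choose_succ_self]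
  · rw [Nat.cast_choose ℚ (show e+1 ≤ a'+1+e+1 by omega),
      Nat.cast_choose ℚ (show e+1 ≤ a'+1+e by omega),
      show a'+1+e+1 - (e+1) = a'+1 by omega, show a'+1+e - (e+1) = a' by omega,
      show a'+1+e+1 = a'+e+2 by omega, show a'+1+e = a'+e+1 by omega]
    simp only [n4, n3, n2, fact1]
    have h1 := fact_cast_ne a'
    have h3 := fact_cast_ne e
    have h4 := fact_cast_ne (a'+e)
    push_cast; field_simp; ring

private lemma I1nB (e b : ℕ) :
    ((e:ℚ)+2) * ((e+b+2).choose (e+1) : ℚ) - ((e:ℚ)+b+3) * ((e+b+1).choose e : ℚ)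
      = ((e+b+1).choose (e+1) : ℚ) := by
  rw [Nat.cast_choose ℚ (show e+1 ≤ e+b+2 by omega),
    Nat.cast_choose ℚ (show e ≤ e+b+1 by omega),
    Nat.cast_choose ℚ (show e+1 ≤ e+b+1 by omega),
    show e+b+2 - (e+1) = b+1 by omega, show e+b+1 - e = b+1 by omega,
    show e+b+1 - (e+1) = b by omega]
  simp only [n4, n3, n2, fact1]
  have h1 := fact_cast_ne b
  have h3 := fact_cast_ne e
  have h4 := fact_cast_ne (e+b)
  push_cast; field_simp; ring

private lemma I2nB (e b : ℕ) :
    (b:ℚ) * ((e+b+1).choose (e+1) : ℚ) = ((e:ℚ)+b+1) * ((e+b).choose (e+1) : ℚ) := by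
  rcases b with _ | b'
  · simp [Nat.choose_succ_self]
  · rw [Nat.cast_choose ℚ (show e+1 ≤ e+(b'+1)+1 by omega),
      Nat.cast_choose ℚ (show e+1 ≤ e+(b'+1) by omega),
      show e+(b'+1)+1 - (e+1) = b'+1 by omega, show e+(b'+1) - (e+1) = b' by omega,
      show e+(b'+1)+1 = e+b'+2 by omega, show e+(b'+1) = e+b'+1 by omega]
    simp only [n4, n3, n2, fact1]
    have h1 := fact_cast_ne b'
    have h3 := fact_cast_ne e
    have h4 := fact_cast_ne (e+b')
    push_cast; field_simp; ring

private lemma ITn1 (e b : ℕ) :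
    ((e:ℚ)+2) * ((e+b+1).choose (e+2) : ℚ) = ((e:ℚ)+b+1) * ((e+b).choose (e+1) : ℚ) := by
  rcases b with _ | b'
  · rw [show e+0+1 = e+1 by omega, show e+0 = e by omega]
    simp [Nat.choose_succ_self]
  · rw [Nat.cast_choose ℚ (show e+2 ≤ e+(b'+1)+1 by omega),
      Nat.cast_choose ℚ (show e+1 ≤ e+(b'+1) by omega),
      show e+(b'+1)+1 - (e+2) = b' by omega, show e+(b'+1) - (e+1) = b' by omega,
      show e+(b'+1)+1 = e+b'+2 by omega, show e+(b'+1) = e+b'+1 by omega]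
    simp only [n4, n3, n2, fact1]
    have h1 := fact_cast_ne b'
    have h3 := fact_cast_ne e
    have h4 := fact_cast_ne (e+b')
    push_cast; field_simp; ring

/- ## flavor lemmas -/

private lemma L_T0 (a b : ℕ) (X Y Z : ℚ)
    (hZ : ((a:ℚ)+b+3) * Z = Y + ((a:ℚ)+b+1) * X) :
    ((a:ℚ)+2) * ((a+b+3).choose (a+2) : ℚ) * Z
      - ((a+b+2).choose (a+1) : ℚ) * Y - (a:ℚ) * ((a+b+1).choose a : ℚ) * X
    = (2*(a:ℚ)+b+2) * ((a+b+1).choose (a+1) : ℚ) * X := by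
  linear_combination (((a+b+2).choose (a+1) : ℚ)) * hZ + Z * I1_0 a b + X * I2_0 a b

private lemma L_Td1 (a b e : ℕ) (X Y Z : ℚ)
    (hZ : ((a:ℚ)+b+3) * Z = Y + ((a:ℚ)+b+1) * X) :
    ((a:ℚ)+e+3) * ((a+b+e+3).choose (e+1) : ℚ) * ((a+b+3).choose (a+2) : ℚ) * Z
      - ((a+b+e+2).choose (e+1) : ℚ) * ((a+b+2).choose (a+1) : ℚ) * Y
      - ((a:ℚ)+e+1) * ((a+b+e+1).choose (e+1) : ℚ) * ((a+b+1).choose a : ℚ) * X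
    = (2*(a:ℚ)+b+e+3) * ((a+b+e+1).choose (e+1) : ℚ) * ((a+b+1).choose (a+1) : ℚ) * X
      + (2*(a:ℚ)+b+e+5) * ((a+b+e+2).choose e : ℚ) * ((a+b+3).choose (a+2) : ℚ) * Z := by
  linear_combination (((a+b+e+2).choose (e+1) : ℚ) * ((a+b+2).choose (a+1) : ℚ)) * hZ
    + Z * I1d a b e + X * I2d a b e

private lemma L_Td0 (a e : ℕ) (X Y Z : ℚ)
    (hZ : ((a:ℚ)+2) * Z = Y + (a:ℚ) * X) :
    ((a:ℚ)+e+3) * ((a+e+2).choose (e+1) : ℚ) * Z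
      - ((a+e+1).choose (e+1) : ℚ) * Y
      - ((a:ℚ)+e+1) * ((a+e).choose (e+1) : ℚ) * X
    = (2*(a:ℚ)+e+4) * ((a+e+1).choose e : ℚ) * Z := by
  linear_combination (((a+e+1).choose (e+1) : ℚ)) * hZ + Z * I1t0 a e + X * I2t0 a e

private lemma L_TnB (e b : ℕ) (X Y Z : ℚ)
    (hZ : ((b:ℚ)+2) * Z = Y + (b:ℚ) * X) :
    ((e:ℚ)+2) * ((b:ℚ)+2) * ((e+b+2).choose (e+1) : ℚ) * Z
      - ((e+b+1).choose (e+1) : ℚ) * Y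
    = ((e:ℚ)+b+1) * ((e+b).choose (e+1) : ℚ) * X
      + ((e:ℚ)+b+3) * ((b:ℚ)+2) * ((e+b+1).choose e : ℚ) * Z := by
  linear_combination (((e+b+1).choose (e+1) : ℚ)) * hZ + (((b:ℚ)+2) * Z) * I1nB e b + X * I2nB e b

/- ## summand in binomial form, certificate function -/

private def Tt (n m d : ℕ) : ℚ :=
  (-1:ℚ)^d * ((n+m-d-1).choose d : ℚ) * ((n+m-2*d).choose (n-d) : ℚ) * Cq (n+m-2*d)

private def Gg (n m d : ℕ) : ℚ :=
  if 1 ≤ d ∧ d ≤ min (n+1) m then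
    (-1:ℚ)^(d-1) * ((n+m+n+1-2*d : ℕ) : ℚ) * ((n+m-d-1).choose (d-1) : ℚ)
      * ((n+m+1-2*d).choose (n+1-d) : ℚ) * Cq (n+m+1-2*d)
  else 0

/- ## termwise telescoping -/

private lemma key3 (p m d : ℕ) (hm : 1 ≤ m) (hd : d ≤ p) (hdm : d ≤ m) :
    ((p:ℚ)+2) * Tt (p+2) m d - (Tt (p+1) m d + (p:ℚ) * Tt p m d)
      = Gg (p+1) m (d+1) - Gg (p+1) m d := by
  rcases Nat.eq_zero_or_pos d with rfl | hdpos
  · -- d = 0 : flavor T0 with a := p, m = b+1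
    obtain ⟨b, rfl⟩ : ∃ b, m = b+1 := ⟨m-1, by omega⟩
    have hg0 : Gg (p+1) (b+1) 0 = 0 := by unfold Gg; rw [if_neg (by omega)]
    have hg1 : Gg (p+1) (b+1) (0+1)
        = ((2*p+b+2 : ℕ) : ℚ) * ((p+b+1).choose (p+1) : ℚ) * Cq (p+b+1) := by
      unfold Gg
      rw [if_pos (by constructor <;> omega)]
      rw [show (p+1)+(b+1)+(p+1)+1-2*(0+1) = 2*p+b+2 by omega,
        show (p+1)+(b+1)-(0+1)-1 = p+b by omega, show 0+1-1 = 0 from rfl,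
        show (p+1)+(b+1)+1-2*(0+1) = p+b+1 by omega, show (p+1)+1-(0+1) = p+1 by omega,
        Nat.choose_zero_right]
      push_cast; ring
    rw [hg0, hg1]
    unfold Tt
    rw [show (p+2)+(b+1)-0-1 = p+b+2 by omega, show (p+2)+(b+1)-2*0 = p+b+3 by omega,
      show (p+2)-0 = p+2 from rfl,
      show (p+1)+(b+1)-0-1 = p+b+1 by omega, show (p+1)+(b+1)-2*0 = p+b+2 by omega,
      show (p+1)-0 = p+1 from rfl,
      show p+(b+1)-0-1 = p+b by omega, show p+(b+1)-2*0 = p+b+1 by omega,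
      show p-0 = p from rfl, Nat.choose_zero_right, Nat.choose_zero_right,
      Nat.choose_zero_right]
    have hZ := Cq_rec (p+b+1)
    rw [show p+b+1+2 = p+b+3 by ring, show p+b+1+1 = p+b+2 by ring] at hZ
    push_cast at hZ ⊢
    linear_combination L_T0 p b (Cq (p+b+1)) (Cq (p+b+2)) (Cq (p+b+3))
      (by push_cast; linear_combination hZ)
  · obtain ⟨e, rfl⟩ : ∃ e, d = e+1 := ⟨d-1, by omega⟩
    obtain ⟨A, rfl⟩ : ∃ A, p = A + (e+1) := ⟨p - (e+1), by omega⟩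
    obtain ⟨B, rfl⟩ : ∃ B, m = B + (e+1) := ⟨m - (e+1), by omega⟩
    have hgd : Gg (A+(e+1)+1) (B+(e+1)) (e+1)
        = (-1:ℚ)^e * ((2*A+B+e+4 : ℕ) : ℚ) * ((A+B+e+1).choose e : ℚ)
          * ((A+B+2).choose (A+2) : ℚ) * Cq (A+B+2) := by
      unfold Gg
      rw [if_pos (by constructor <;> omega)]
      rw [show (A+(e+1)+1)+(B+(e+1))+(A+(e+1)+1)+1-2*(e+1) = 2*A+B+e+4 by omega,
        show (A+(e+1)+1)+(B+(e+1))-(e+1)-1 = A+B+e+1 by omega, show e+1-1 = e from rfl,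
        show (A+(e+1)+1)+(B+(e+1))+1-2*(e+1) = A+B+2 by omega,
        show (A+(e+1)+1)+1-(e+1) = A+2 by omega]
    rcases B with _ | b
    · -- B = 0 : top of range, flavor Td0
      have hgd1 : Gg (A+(e+1)+1) (0+(e+1)) (e+1+1) = 0 := by
        unfold Gg; rw [if_neg (by omega)]
      rw [hgd, hgd1]
      unfold Tt
      rw [show (A+(e+1)+2)+(0+(e+1))-(e+1)-1 = A+e+2 by omega,
        show (A+(e+1)+2)+(0+(e+1))-2*(e+1) = A+2 by omega,
        show (A+(e+1)+2)-(e+1) = A+2 by omega,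
        show (A+(e+1)+1)+(0+(e+1))-(e+1)-1 = A+e+1 by omega,
        show (A+(e+1)+1)+(0+(e+1))-2*(e+1) = A+1 by omega,
        show (A+(e+1)+1)-(e+1) = A+1 by omega,
        show (A+(e+1))+(0+(e+1))-(e+1)-1 = A+e by omega,
        show (A+(e+1))+(0+(e+1))-2*(e+1) = A by omega,
        show (A+(e+1))-(e+1) = A by omega,
        Nat.choose_self, Nat.choose_self, Nat.choose_self]
      simp only [Nat.add_zero]
      push_cast
      linear_combination ((-1:ℚ)^(e+1)) * L_Td0 A e (Cq A) (Cq (A+1)) (Cq (A+2)) (Cq_rec A)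
    · -- B = b+1 : interior, flavor Td1
      have hgd1 : Gg (A+(e+1)+1) ((b+1)+(e+1)) (e+1+1)
          = (-1:ℚ)^(e+1) * ((2*A+b+e+3 : ℕ) : ℚ) * ((A+b+e+1).choose (e+1) : ℚ)
            * ((A+b+1).choose (A+1) : ℚ) * Cq (A+b+1) := by
        unfold Gg
        rw [if_pos (by constructor <;> omega)]
        rw [show (A+(e+1)+1)+((b+1)+(e+1))+(A+(e+1)+1)+1-2*(e+1+1) = 2*A+b+e+3 by omega,
          show (A+(e+1)+1)+((b+1)+(e+1))-(e+1+1)-1 = A+b+e+1 by omega,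
          show e+1+1-1 = e+1 from rfl,
          show (A+(e+1)+1)+((b+1)+(e+1))+1-2*(e+1+1) = A+b+1 by omega,
          show (A+(e+1)+1)+1-(e+1+1) = A+1 by omega]
      have hgd' : Gg (A+(e+1)+1) ((b+1)+(e+1)) (e+1)
          = (-1:ℚ)^e * ((2*A+b+e+5 : ℕ) : ℚ) * ((A+b+e+2).choose e : ℚ)
            * ((A+b+3).choose (A+2) : ℚ) * Cq (A+b+3) := by
        rw [hgd]
        rw [show A+(b+1)+e+1 = A+b+e+2 by omega, show A+(b+1)+2 = A+b+3 by omega,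
          show 2*A+(b+1)+e+4 = 2*A+b+e+5 by omega]
      rw [hgd', hgd1]
      unfold Tt
      rw [show (A+(e+1)+2)+((b+1)+(e+1))-(e+1)-1 = A+b+e+3 by omega,
        show (A+(e+1)+2)+((b+1)+(e+1))-2*(e+1) = A+b+3 by omega,
        show (A+(e+1)+2)-(e+1) = A+2 by omega,
        show (A+(e+1)+1)+((b+1)+(e+1))-(e+1)-1 = A+b+e+2 by omega,
        show (A+(e+1)+1)+((b+1)+(e+1))-2*(e+1) = A+b+2 by omega,
        show (A+(e+1)+1)-(e+1) = A+1 by omega,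
        show (A+(e+1))+((b+1)+(e+1))-(e+1)-1 = A+b+e+1 by omega,
        show (A+(e+1))+((b+1)+(e+1))-2*(e+1) = A+b+1 by omega,
        show (A+(e+1))-(e+1) = A by omega]
      have hZ := Cq_rec (A+b+1)
      rw [show A+b+1+2 = A+b+3 by ring, show A+b+1+1 = A+b+2 by ring] at hZ
      push_cast at hZ
      push_cast
      linear_combination ((-1:ℚ)^(e+1)) * L_Td1 A b e (Cq (A+b+1)) (Cq (A+b+2)) (Cq (A+b+3))
        (by linear_combination hZ)

/- ## sum peeling helpers -/

private lemma peel1b (f : ℕ → ℚ) (k : ℕ) :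
    ∑ d ∈ Finset.range (k+2), f d = (∑ d ∈ Finset.range (k+1), f d) + f (k+1) := by
  rw [show k+2 = (k+1)+1 from rfl, Finset.sum_range_succ]

private lemma peel2 (f : ℕ → ℚ) (k : ℕ) :
    ∑ d ∈ Finset.range (k+3), f d
      = ((∑ d ∈ Finset.range (k+1), f d) + f (k+1)) + f (k+2) := by
  rw [show k+3 = (k+2)+1 from rfl, Finset.sum_range_succ, show k+2 = (k+1)+1 from rfl,
    Finset.sum_range_succ]

/- ## the three-term recurrence for the sum -/

private def Es (n m : ℕ) : ℚ := ∑ d ∈ Finset.range (min n m + 1), Tt n m d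

private lemma recur (p m : ℕ) (hm : 1 ≤ m) :
    ((p:ℚ)+2) * Es (p+2) m = Es (p+1) m + (p:ℚ) * Es p m := by
  have hG0 : Gg (p+1) m 0 = 0 := by unfold Gg; rw [if_neg (by omega)]
  rcases lt_trichotomy m (p+1) with hA | hE | hB
  · -- m ≤ p
    unfold Es
    rw [show min (p+2) m + 1 = m+1 by omega, show min (p+1) m + 1 = m+1 by omega,
      show min p m + 1 = m+1 by omega]
    have hsum : ∑ d ∈ Finset.range (m+1),
        (((p:ℚ)+2) * Tt (p+2) m d - (Tt (p+1) m d + (p:ℚ) * Tt p m d))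
        = Gg (p+1) m (m+1) - Gg (p+1) m 0 := by
      rw [Finset.sum_congr rfl (fun d hd => key3 p m d hm
        (by simp only [Finset.mem_range] at hd; omega)
        (by simp only [Finset.mem_range] at hd; omega)),
        Finset.sum_range_sub (Gg (p+1) m)]
    have hGtop : Gg (p+1) m (m+1) = 0 := by unfold Gg; rw [if_neg (by omega)]
    rw [hGtop, hG0, sub_zero] at hsum
    rw [Finset.sum_sub_distrib, Finset.sum_add_distrib, ← Finset.mul_sum, ← Finset.mul_sum] at hsum
    linarith [hsum]
  · -- m = p+1
    subst hE
    unfold Es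
    rw [show min (p+2) (p+1) + 1 = p+2 by omega, show min (p+1) (p+1) + 1 = p+2 by omega,
      show min p (p+1) + 1 = p+1 by omega]
    rw [peel1b (fun d => Tt (p+2) (p+1) d) p, peel1b (fun d => Tt (p+1) (p+1) d) p]
    have hsum : ∑ d ∈ Finset.range (p+1),
        (((p:ℚ)+2) * Tt (p+2) (p+1) d - (Tt (p+1) (p+1) d + (p:ℚ) * Tt p (p+1) d))
        = Gg (p+1) (p+1) (p+1) - Gg (p+1) (p+1) 0 := by
      rw [Finset.sum_congr rfl (fun d hd => key3 p (p+1) d (by omega)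
        (by simp only [Finset.mem_range] at hd; omega)
        (by simp only [Finset.mem_range] at hd; omega)),
        Finset.sum_range_sub (Gg (p+1) (p+1))]
    rw [hG0, sub_zero] at hsum
    rw [Finset.sum_sub_distrib, Finset.sum_add_distrib, ← Finset.mul_sum, ← Finset.mul_sum] at hsum
    have h1 : Tt (p+2) (p+1) (p+1) = (-1:ℚ)^(p+1) * Cq 1 := by
      unfold Tt
      rw [show (p+2)+(p+1)-(p+1)-1 = p+1 by omega, show (p+2)+(p+1)-2*(p+1) = 1 by omega,
        show (p+2)-(p+1) = 1 by omega, Nat.choose_self, Nat.choose_self]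
      push_cast; ring
    have h2 : Tt (p+1) (p+1) (p+1) = 0 := by
      unfold Tt
      rw [show (p+1)+(p+1)-(p+1)-1 = p by omega, Nat.choose_succ_self]
      push_cast; ring
    have h3 : Gg (p+1) (p+1) (p+1) = (-1:ℚ)^p * ((p:ℚ)+2) * Cq 1 := by
      unfold Gg
      rw [if_pos (by constructor <;> omega)]
      rw [show (p+1)+(p+1)+(p+1)+1-2*(p+1) = p+2 by omega,
        show (p+1)+(p+1)-(p+1)-1 = p by omega, show p+1-1 = p from rfl,
        show (p+1)+(p+1)+1-2*(p+1) = 1 by omega, show (p+1)+1-(p+1) = 1 by omega,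
        Nat.choose_self, Nat.choose_self]
      push_cast; ring
    linear_combination hsum + ((p:ℚ)+2)*h1 - h2 + h3
  · -- m ≥ p+2
    obtain ⟨c, rfl⟩ : ∃ c, m = p+2+c := ⟨m-(p+2), by omega⟩
    unfold Es
    rw [show min (p+2) (p+2+c) + 1 = p+3 by omega, show min (p+1) (p+2+c) + 1 = p+2 by omega,
      show min p (p+2+c) + 1 = p+1 by omega]
    rw [peel2 (fun d => Tt (p+2) (p+2+c) d) p, peel1b (fun d => Tt (p+1) (p+2+c) d) p]
    have hsum : ∑ d ∈ Finset.range (p+1),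
        (((p:ℚ)+2) * Tt (p+2) (p+2+c) d - (Tt (p+1) (p+2+c) d + (p:ℚ) * Tt p (p+2+c) d))
        = Gg (p+1) (p+2+c) (p+1) - Gg (p+1) (p+2+c) 0 := by
      rw [Finset.sum_congr rfl (fun d hd => key3 p (p+2+c) d (by omega)
        (by simp only [Finset.mem_range] at hd; omega)
        (by simp only [Finset.mem_range] at hd; omega)),
        Finset.sum_range_sub (Gg (p+1) (p+2+c))]
    rw [hG0, sub_zero] at hsum
    rw [Finset.sum_sub_distrib, Finset.sum_add_distrib, ← Finset.mul_sum, ← Finset.mul_sum] at hsum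
    have hv1 : Tt (p+2) (p+2+c) (p+1)
        = (-1:ℚ)^(p+1) * ((p+c+2).choose (p+1) : ℚ) * ((c:ℚ)+2) * Cq (c+2) := by
      unfold Tt
      rw [show (p+2)+(p+2+c)-(p+1)-1 = p+c+2 by omega,
        show (p+2)+(p+2+c)-2*(p+1) = c+2 by omega, show (p+2)-(p+1) = 1 by omega,
        Nat.choose_one_right]
      push_cast; ring
    have hv2 : Tt (p+1) (p+2+c) (p+1)
        = (-1:ℚ)^(p+1) * ((p+c+1).choose (p+1) : ℚ) * Cq (c+1) := by
      unfold Tt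
      rw [show (p+1)+(p+2+c)-(p+1)-1 = p+c+1 by omega,
        show (p+1)+(p+2+c)-2*(p+1) = c+1 by omega, show (p+1)-(p+1) = 0 by omega,
        Nat.choose_zero_right]
      push_cast; ring
    have hv3 : Tt (p+2) (p+2+c) (p+2)
        = (-1:ℚ)^(p+2) * ((p+c+1).choose (p+2) : ℚ) * Cq c := by
      unfold Tt
      rw [show (p+2)+(p+2+c)-(p+2)-1 = p+c+1 by omega,
        show (p+2)+(p+2+c)-2*(p+2) = c by omega, show (p+2)-(p+2) = 0 by omega,
        Nat.choose_zero_right]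
      push_cast; ring
    have hg1 : Gg (p+1) (p+2+c) (p+1)
        = (-1:ℚ)^p * ((p:ℚ)+c+3) * ((c:ℚ)+2) * ((p+c+1).choose p : ℚ) * Cq (c+2) := by
      unfold Gg
      rw [if_pos (by constructor <;> omega)]
      rw [show (p+1)+(p+2+c)+(p+1)+1-2*(p+1) = p+c+3 by omega,
        show (p+1)+(p+2+c)-(p+1)-1 = p+c+1 by omega, show p+1-1 = p from rfl,
        show (p+1)+(p+2+c)+1-2*(p+1) = c+2 by omega, show (p+1)+1-(p+1) = 1 by omega,
        Nat.choose_one_right]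
      push_cast; ring
    have hg2 : Gg (p+1) (p+2+c) (p+2)
        = (-1:ℚ)^(p+1) * ((p:ℚ)+c+1) * ((p+c).choose (p+1) : ℚ) * Cq c := by
      unfold Gg
      rw [if_pos (by constructor <;> omega)]
      rw [show (p+1)+(p+2+c)+(p+1)+1-2*(p+2) = p+c+1 by omega,
        show (p+1)+(p+2+c)-(p+2)-1 = p+c by omega, show p+2-1 = p+1 from rfl,
        show (p+1)+(p+2+c)+1-2*(p+2) = c by omega, show (p+1)+1-(p+2) = 0 by omega,
        Nat.choose_zero_right]
      push_cast; ring
    have hZc := Cq_rec c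
    have hT1 : ((p:ℚ)+2) * Tt (p+2) (p+2+c) (p+1) - Tt (p+1) (p+2+c) (p+1)
        = Gg (p+1) (p+2+c) (p+2) - Gg (p+1) (p+2+c) (p+1) := by
      rw [hv1, hv2, hg1, hg2]
      linear_combination ((-1:ℚ)^(p+1)) * L_TnB p c (Cq c) (Cq (c+1)) (Cq (c+2))
        (by push_cast; linear_combination hZc)
    have hT2 : ((p:ℚ)+2) * Tt (p+2) (p+2+c) (p+2) = - Gg (p+1) (p+2+c) (p+2) := by
      rw [hv3, hg2]
      linear_combination ((-1:ℚ)^(p+2) * Cq c) * ITn1 p c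
    linear_combination hsum + hT1 + hT2

/- ## base cases and main induction -/

private lemma Es_m0 (n : ℕ) : Es n 0 = Cq n := by
  unfold Es
  rw [show min n 0 + 1 = 0+1 by omega, Finset.sum_range_one]
  unfold Tt
  rw [show n+0-2*0 = n by omega, show n-0 = n from rfl, Nat.choose_zero_right, Nat.choose_self]
  push_cast; ring

private lemma Es_0m (m : ℕ) : Es 0 m = Cq m := by
  unfold Es
  rw [show min 0 m + 1 = 0+1 by omega, Finset.sum_range_one]
  unfold Tt
  rw [show 0+m-2*0 = m by omega, show (0:ℕ)-0 = 0 from rfl, Nat.choose_zero_right,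
    Nat.choose_zero_right]
  push_cast; ring

private lemma Es_1m (m : ℕ) (hm : 1 ≤ m) : Es 1 m = Cq 1 * Cq m := by
  obtain ⟨b, rfl⟩ : ∃ b, m = b+1 := ⟨m-1, by omega⟩
  unfold Es
  rw [show min 1 (b+1) + 1 = 0+1+1 by omega, Finset.sum_range_succ, Finset.sum_range_one]
  unfold Tt
  rw [show 1+(b+1)-0-1 = b+1 by omega, show 1+(b+1)-2*0 = b+2 by omega,
    show 1-0 = 1 from rfl,
    show 1+(b+1)-(0+1)-1 = b by omega, show 1+(b+1)-2*(0+1) = b by omega,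
    show 1-(0+1) = 0 from rfl,
    Nat.choose_zero_right, Nat.choose_zero_right, Nat.choose_one_right, Nat.choose_one_right]
  rw [Cq_one]
  have hZ := Cq_rec b
  push_cast at hZ ⊢
  linear_combination hZ

private lemma Es_main (n : ℕ) : ∀ m : ℕ, 1 ≤ m → Es n m = Cq n * Cq m := by
  induction n using Nat.twoStepInduction with
  | zero => intro m hm; rw [Es_0m, Cq_zero, one_mul]
  | one => intro m hm; exact Es_1m m hm
  | more p ih1 ih2 =>
    intro m hm
    have h := recur p m hm
    rw [ih1 m hm, ih2 m hm] at h
    have h2 := Cq_rec p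
    have hne : ((p:ℚ)+2) ≠ 0 := by positivity
    apply mul_left_cancel₀ hne
    rw [h]
    linear_combination (-(Cq m)) * h2

/- ## bridge from the statement's summand to Tt -/

private lemma bridge (n m d : ℕ) (h : ¬(n = 0 ∧ m = 0)) (hdn : d ≤ n) (hdm : d ≤ m) :
    (-1 : ℚ) ^ d / 4 ^ ((n + m - 2 * d) / 2)
        * ((n + m - 2 * d : ℕ) : ℚ) / ((n + m - d : ℕ) : ℚ)
        * (((n + m - d).factorial : ℚ) /
            ((n - d).factorial * (m - d).factorial * d.factorial))
        * ((2 * ((n + m - 2 * d) / 2)).choose ((n + m - 2 * d) / 2) : ℚ)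
    = Tt n m d := by
  obtain ⟨a, rfl⟩ : ∃ a, n = a + d := ⟨n - d, by omega⟩
  obtain ⟨b, rfl⟩ : ∃ b, m = b + d := ⟨m - d, by omega⟩
  rcases Nat.eq_zero_or_pos (a+b) with hab | hab
  · have ha : a = 0 := by omega
    have hb : b = 0 := by omega
    subst ha; subst hb
    have hd1 : 1 ≤ d := by
      rcases Nat.eq_zero_or_pos d with rfl | h1
      · exact absurd ⟨rfl, rfl⟩ h
      · omega
    obtain ⟨t, rfl⟩ : ∃ t, d = t+1 := ⟨d-1, by omega⟩
    unfold Tt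
    rw [show (0+(t+1))+(0+(t+1))-2*(t+1) = 0 by omega,
      show (0+(t+1))+(0+(t+1))-(t+1)-1 = t by omega, Nat.choose_succ_self]
    norm_num
  · obtain ⟨r, hr⟩ : ∃ r, a+b = r+1 := ⟨a+b-1, by omega⟩
    unfold Tt
    rw [show (a+d)+(b+d)-2*d = a+b by omega, show (a+d)+(b+d)-d = a+b+d by omega,
      show (a+d)-d = a by omega, show (b+d)-d = b by omega,
      show a+b+d-1 = r+d by omega]
    have hX : ((a+b:ℕ) : ℚ) / ((a+b+d : ℕ) : ℚ)
        * (((a+b+d).factorial : ℚ) / ((a.factorial : ℚ) * (b.factorial : ℚ) * (d.factorial : ℚ)))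
        = ((r+d).choose d : ℚ) * ((a+b).choose a : ℚ) := by
      rw [Nat.cast_choose ℚ (show d ≤ r+d by omega), Nat.cast_choose ℚ (show a ≤ a+b by omega),
        show r+d-d = r by omega, show a+b-a = b by omega, show a+b = r+1 from hr]
      rw [show r+1+d = r+d+1 by omega, fact1 (r+d), fact1 r]
      have h1 := fact_cast_ne a
      have h2 := fact_cast_ne b
      have h3 := fact_cast_ne d
      have h4 := fact_cast_ne r
      have h5 := fact_cast_ne (r+d)
      push_cast
      field_simp
    unfold Cq
    linear_combination ((-1:ℚ)^d * ((2*((a+b)/2)).choose ((a+b)/2) : ℚ) / 4^((a+b)/2)) * hX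

end CBD

theorem central_binom_delannoy_identity (n m : ℕ) (h : ¬(n = 0 ∧ m = 0)) :
    ∑ d ∈ Finset.range (min n m + 1),
      (-1 : ℚ) ^ d / 4 ^ ((n + m - 2 * d) / 2)
        * ((n + m - 2 * d : ℕ) : ℚ) / ((n + m - d : ℕ) : ℚ)
        * (((n + m - d).factorial : ℚ) /
            ((n - d).factorial * (m - d).factorial * d.factorial))
        * ((2 * ((n + m - 2 * d) / 2)).choose ((n + m - 2 * d) / 2) : ℚ)
    = (1 / 4 ^ (n / 2 + m / 2))
        * ((2 * (n / 2)).choose (n / 2) : ℚ) * ((2 * (m / 2)).choose (m / 2) : ℚ) := by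
  have hsum : (∑ d ∈ Finset.range (min n m + 1),
      (-1 : ℚ) ^ d / 4 ^ ((n + m - 2 * d) / 2)
        * ((n + m - 2 * d : ℕ) : ℚ) / ((n + m - d : ℕ) : ℚ)
        * (((n + m - d).factorial : ℚ) /
            ((n - d).factorial * (m - d).factorial * d.factorial))
        * ((2 * ((n + m - 2 * d) / 2)).choose ((n + m - 2 * d) / 2) : ℚ)) = Es n m := by
    unfold Es
    refine Finset.sum_congr rfl ?_
    intro d hd
    simp only [Finset.mem_range] at hd
    exact bridge n m d h (by omega) (by omega)
  rw [hsum]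
  have hr : (1 / 4 ^ (n / 2 + m / 2) : ℚ)
      * ((2 * (n / 2)).choose (n / 2) : ℚ) * ((2 * (m / 2)).choose (m / 2) : ℚ)
      = Cq n * Cq m := by
    unfold Cq; rw [pow_add]; ring
  rw [hr]
  rcases Nat.eq_zero_or_pos m with rfl | hm
  · rw [Es_m0, Cq_zero, mul_one]
  · exact Es_main n m hm
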